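/- Let A be a commutative ℚ-algebra, let d ≥ 1, and let R be a d × d matrix with entries in A. Consider the matrix Φ(T) = ∑_{k≥0} (1/(4^k·(2k+1)!))·T^{2k}·R^{2k} with entries in the formal power series ring A[[T]] (the formal expansion of sinh(TR/2)/(TR/2)). Then the determinant of Φ(T) in A[[T]] equals exp(∑_{j≥1} (B_{2j}/(2j·(2j)!))·tr(R^{2j})·T^{2j}). (This is the determinant–trace identity behind the computation exp(−∑_{j≥1} (B_{2j}/(4j·(2j)!))·u^j·tr(R^{2j})) = det^{1/2}((uR/2)/sinh(uR/2)) identifying the wheel-weight exponential of a curvature matrix with the Â-class.) -/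

import Mathlib

open PowerSeries Finset


/-!
STATEMENT 3: Let A be a commutative ℚ-algebra, d ≥ 1, and R a d×d matrix over A.
Let Φ(T) = ∑_{k≥0} (1/(4^k·(2k+1)!))·T^{2k}·R^{2k}, a matrix with entries in A[[T]]
(the formal expansion of sinh(TR/2)/(TR/2)).  Then in A[[T]]:
  det Φ(T) = exp(∑_{j≥1} (B_{2j}/(2j·(2j)!))·tr(R^{2j})·T^{2j}),
where B_n is the n-th Bernoulli number with B_1 = −1/2 (Mathlib's `bernoulli`).
-/

/-- The exponential of a formal power series `f` over a commutative ℚ-algebra `A`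
(intended for `f` with zero constant term): coefficient `n` of `exp f` is
`∑_{m=0}^{n} (1/m!)·(coefficient n of f^m)`.  For `f` with zero constant term this
agrees with substituting `f` into `∑_m X^m/m!`. -/
noncomputable def expPS (A : Type*) [CommRing A] [Algebra ℚ A] (f : PowerSeries A) :
    PowerSeries A :=
  PowerSeries.mk fun n =>
    ∑ m ∈ Finset.range (n + 1),
      algebraMap ℚ A (1 / (Nat.factorial m : ℚ)) * PowerSeries.coeff (R := A) n (f ^ m)

/-- `Φ(T) = ∑_{k≥0} T^{2k}·R^{2k}/(4^k·(2k+1)!)` as a matrix over `A[[T]]`: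
the `(i,j)` entry has `T^n`-coefficient `(1/(2^n·(n+1)!))·(R^n)_{ij}` for `n` even
(note `4^k = 2^{2k}`), and `0` for `n` odd. -/
noncomputable def sinhMatrix {A : Type*} [CommRing A] [Algebra ℚ A] {d : ℕ}
    (R : Matrix (Fin d) (Fin d) A) : Matrix (Fin d) (Fin d) (PowerSeries A) :=
  Matrix.of fun i j =>
    PowerSeries.mk fun n =>
      if Even n then
        algebraMap ℚ A (1 / ((2 : ℚ) ^ n * (Nat.factorial (n + 1) : ℚ))) * (R ^ n) i j
      else 0

/-- `∑_{j≥1} (B_{2j}/(2j·(2j)!))·tr(R^{2j})·T^{2j}` in `A[[T]]`: the coefficient of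
`T^n` is `(B_n/(n·n!))·tr(R^n)` when `n` is even and nonzero, and `0` otherwise. -/
noncomputable def traceWheelSeries {A : Type*} [CommRing A] [Algebra ℚ A] {d : ℕ}
    (R : Matrix (Fin d) (Fin d) A) : PowerSeries A :=
  PowerSeries.mk fun n =>
    if Even n ∧ n ≠ 0 then
      algebraMap ℚ A (bernoulli n / ((n : ℚ) * (Nat.factorial n : ℚ))) *
        Matrix.trace (R ^ n)
    else 0


theorem derivation_prod {R S : Type*} [CommRing R] [CommRing S] [Algebra R S]
    (D : Derivation R S S) {ι : Type*} [DecidableEq ι] (s : Finset ι) (f : ι → S) :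
    D (∏ i ∈ s, f i) = ∑ i ∈ s, D (f i) * ∏ j ∈ s.erase i, f j := by
  induction s using Finset.induction_on with
  | empty => simp
  | insert a s ha ih =>
    rw [Finset.prod_insert ha, D.leibniz, smul_eq_mul, smul_eq_mul, ih,
      Finset.sum_insert ha, Finset.erase_insert ha, Finset.mul_sum, add_comm]
    congr 1
    · ring
    · refine Finset.sum_congr rfl fun i hi => ?_
      rw [Finset.erase_insert_of_ne (by rintro rfl; exact ha hi),
        Finset.prod_insert (fun h => ha (Finset.erase_subset _ _ h))]
      ring

theorem derivation_det_aux {R S : Type*} [CommRing R] [CommRing S] [Algebra R S]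
    (D : Derivation R S S) {d : ℕ} (M : Matrix (Fin d) (Fin d) S) :
    D M.det = ∑ j, (M.updateCol j (fun k => D (M k j))).det := by
  rw [Matrix.det_apply', map_sum]
  have h1 : ∀ σ : Equiv.Perm (Fin d),
      D (((Equiv.Perm.sign σ : ℤ) : S) * ∏ i, M (σ i) i)
      = ∑ j, ((Equiv.Perm.sign σ : ℤ) : S) *
          (D (M (σ j) j) * ∏ i ∈ Finset.univ.erase j, M (σ i) i) := by
    intro σ
    rw [D.leibniz, D.map_intCast, smul_zero, add_zero, smul_eq_mul,
      derivation_prod, Finset.mul_sum]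
  rw [Finset.sum_congr rfl (fun σ _ => h1 σ), Finset.sum_comm]
  refine Finset.sum_congr rfl fun j _ => ?_
  rw [Matrix.det_apply']
  refine Finset.sum_congr rfl fun σ _ => ?_
  congr 1
  rw [← Finset.mul_prod_erase Finset.univ _ (Finset.mem_univ j)]
  congr 1
  · rw [Matrix.updateCol_apply, if_pos rfl]
  · exact Finset.prod_congr rfl fun i hi => by
      rw [Matrix.updateCol_apply, if_neg (Finset.ne_of_mem_erase hi)]

theorem derivation_det {R S : Type*} [CommRing R] [CommRing S] [Algebra R S]
    (D : Derivation R S S) {d : ℕ} (M : Matrix (Fin d) (Fin d) S) :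
    D M.det = Matrix.trace (M.adjugate * M.map (D ·)) := by
  rw [derivation_det_aux]
  rw [Matrix.trace]
  refine Finset.sum_congr rfl fun j _ => ?_
  rw [← Matrix.cramer_apply, Matrix.cramer_eq_adjugate_mulVec]
  simp [Matrix.mulVec, Matrix.diag, Matrix.mul_apply, Matrix.map_apply, dotProduct]

noncomputable def fS : PowerSeries ℚ :=
  PowerSeries.mk fun n =>
    if Even n then 1 / ((2 : ℚ) ^ n * (Nat.factorial (n + 1) : ℚ)) else 0

noncomputable def E (a : ℚ) : PowerSeries ℚ := PowerSeries.rescale a (PowerSeries.exp ℚ)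

theorem coeff_E (a : ℚ) (n : ℕ) : PowerSeries.coeff (R := ℚ) n (E a) = a ^ n / (Nat.factorial n : ℚ) := by
  rw [E, PowerSeries.coeff_rescale, PowerSeries.coeff_exp]
  simp [Algebra.algebraMap_self, div_eq_mul_inv]

theorem X_mul_fS : PowerSeries.X * fS = E (1/2) - E (-(1/2)) := by
  ext n
  rw [map_sub, coeff_E, coeff_E]
  cases n with
  | zero => simp [PowerSeries.coeff_zero_eq_constantCoeff]
  | succ m =>
    rw [PowerSeries.coeff_succ_X_mul, fS, PowerSeries.coeff_mk]
    rcases Nat.even_or_odd m with hm | hm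
    · have hodd : Odd (m + 1) := Even.add_one hm
      rw [if_pos hm]
      have : (-(1/2) : ℚ) ^ (m+1) = -((1/2:ℚ)^(m+1)) := Odd.neg_pow hodd _
      rw [this]
      have h2 : ((2:ℚ))^m ≠ 0 := by positivity
      have h3 : ((Nat.factorial (m+1) : ℚ)) ≠ 0 := Nat.cast_ne_zero.mpr (Nat.factorial_ne_zero _)
      field_simp
      ring
      rw [← mul_pow]; norm_num
    · rw [if_neg (by simpa using hm)]
      have heven : Even (m + 1) := Odd.add_one hm
      have : (-(1/2) : ℚ) ^ (m+1) = ((1/2:ℚ))^(m+1) := Even.neg_pow heven _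
      rw [this]
      ring

theorem derivative_E (a : ℚ) :
    (PowerSeries.derivative ℚ) (E a) = PowerSeries.C (R := ℚ) a * E a := by
  ext n
  rw [PowerSeries.coeff_derivative, coeff_E, PowerSeries.coeff_C_mul, coeff_E,
    Nat.factorial_succ]
  have h3 : ((Nat.factorial n : ℚ)) ≠ 0 := Nat.cast_ne_zero.mpr (Nat.factorial_ne_zero _)
  have h4 : ((n:ℚ) + 1) ≠ 0 := by positivity
  push_cast
  field_simp
  ring

theorem key_exp : (PowerSeries.exp ℚ - 1) * (E (1/2) + E (-(1/2)))
    = (PowerSeries.exp ℚ + 1) * (E (1/2) - E (-(1/2))) := by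
  have e2 : PowerSeries.exp ℚ * E (-(1/2)) = E (1/2) := by
    have := PowerSeries.exp_mul_exp_eq_exp_add (1 : ℚ) (-(1/2))
    rw [PowerSeries.rescale_one] at this
    simp only [RingHom.id_apply] at this
    rw [E, E, this]
    norm_num
  linear_combination 2 * e2

theorem X_mul_derivative_fS :
    (PowerSeries.X : PowerSeries ℚ) * (PowerSeries.derivative ℚ) fS
      = (bernoulliPowerSeries ℚ - 1 + PowerSeries.C (R := ℚ) (1/2) * PowerSeries.X) * fS := by
  have hXne : (PowerSeries.X : PowerSeries ℚ) ≠ 0 := PowerSeries.X_ne_zero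
  have hexp : PowerSeries.exp ℚ - 1 ≠ 0 := by
    intro h
    have := congrArg (PowerSeries.coeff (R := ℚ) 1) h
    simp [PowerSeries.coeff_exp] at this
  apply mul_left_cancel₀ (mul_ne_zero hXne hexp)
  have h1 : PowerSeries.X * (PowerSeries.derivative ℚ) fS
      = PowerSeries.C (R := ℚ) (1/2) * (E (1/2) + E (-(1/2))) - fS := by
    have hD := congrArg (PowerSeries.derivative ℚ) X_mul_fS
    rw [Derivation.leibniz, map_sub, derivative_E, derivative_E,
      PowerSeries.derivative_X, smul_eq_mul, smul_eq_mul, mul_one] at hD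
    rw [show PowerSeries.C (R := ℚ) (-(1/2)) = - PowerSeries.C (R := ℚ) (1/2) from map_neg _ _] at hD
    linear_combination hD
  have h2 := bernoulliPowerSeries_mul_exp_sub_one ℚ
  have h3 := key_exp
  have h4 := X_mul_fS
  have h5 : PowerSeries.C (R := ℚ) (1/2) * 2 = 1 := by
    rw [show (2 : PowerSeries ℚ) = PowerSeries.C (R := ℚ) 2 from (map_ofNat _ 2).symm, ← map_mul]
    norm_num
  linear_combination (PowerSeries.X*(PowerSeries.exp ℚ - 1))*h1
    + (PowerSeries.X * PowerSeries.C (R := ℚ) (1/2))*h3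
    - (PowerSeries.C (R := ℚ) (1/2)*(PowerSeries.exp ℚ + 1)*PowerSeries.X)*h4
    - (PowerSeries.X*fS)*h2 + (PowerSeries.X^2*fS)*h5

section Theta
variable {A : Type*} [CommRing A] [Algebra ℚ A] {d : ℕ} (R : Matrix (Fin d) (Fin d) A)

noncomputable def theta (p : PowerSeries ℚ) : Matrix (Fin d) (Fin d) (PowerSeries A) :=
  Matrix.of fun i j =>
    PowerSeries.mk fun n => algebraMap ℚ A (PowerSeries.coeff (R := ℚ) n p) * (R ^ n) i j

theorem theta_mul (p q : PowerSeries ℚ) : theta R (p * q) = theta R p * theta R q := by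
  ext i j n
  rw [Matrix.mul_apply, map_sum]
  simp only [theta, Matrix.of_apply, PowerSeries.coeff_mk, PowerSeries.coeff_mul]
  rw [Finset.sum_comm, map_sum, Finset.sum_mul]
  refine Finset.sum_congr rfl fun ab hab => ?_
  have h : ab.1 + ab.2 = n := Finset.HasAntidiagonal.mem_antidiagonal.mp hab
  rw [map_mul, ← h, pow_add, Matrix.mul_apply, Finset.mul_sum]
  exact Finset.sum_congr rfl fun k _ => by ring

theorem trace_theta (p : PowerSeries ℚ) :
    Matrix.trace (theta R p)
      = PowerSeries.mk fun n => algebraMap ℚ A (PowerSeries.coeff (R := ℚ) n p) * Matrix.trace (R ^ n) := by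
  apply PowerSeries.ext
  intro n
  rw [Matrix.trace, map_sum, PowerSeries.coeff_mk, Matrix.trace, Finset.mul_sum]
  exact Finset.sum_congr rfl fun i _ => by
    simp [theta, Matrix.diag]

theorem sinhMatrix_eq_theta : sinhMatrix R = theta R fS := by
  ext i j n
  simp only [sinhMatrix, theta, fS, Matrix.of_apply, PowerSeries.coeff_mk]
  split_ifs with h
  · rfl
  · simp

theorem X_smul_map_derivative (p : PowerSeries ℚ) :
    (PowerSeries.X : PowerSeries A) • ((theta R p).map (PowerSeries.derivative A ·))
      = theta R (PowerSeries.X * (PowerSeries.derivative ℚ) p) := by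
  ext i j n
  simp only [Matrix.smul_apply, Matrix.map_apply, theta, Matrix.of_apply, smul_eq_mul,
    PowerSeries.coeff_mk]
  cases n with
  | zero =>
    simp [PowerSeries.coeff_zero_eq_constantCoeff]
  | succ m =>
    rw [PowerSeries.coeff_succ_X_mul, PowerSeries.coeff_succ_X_mul, PowerSeries.coeff_derivative,
      PowerSeries.coeff_derivative, PowerSeries.coeff_mk, map_mul]
    have : algebraMap ℚ A ((m : ℚ) + 1) = ((m : A) + 1) := by
      push_cast
      simp
    rw [this]
    ring
end Theta

section ExpPS
variable {A : Type*} [CommRing A] [Algebra ℚ A]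

theorem coeff_pow_zero_of_lt {h : PowerSeries A} (hh : PowerSeries.constantCoeff (R := A) h = 0)
    {a m : ℕ} (ham : a < m) : PowerSeries.coeff (R := A) a (h ^ m) = 0 := by
  have hX : (PowerSeries.X : PowerSeries A) ^ m ∣ h ^ m :=
    pow_dvd_pow_of_dvd (PowerSeries.X_dvd_iff.mpr hh) m
  exact PowerSeries.X_pow_dvd_iff.mp hX a ham

theorem coeff_zero_expPS (h : PowerSeries A) : PowerSeries.coeff (R := A) 0 (expPS A h) = 1 := by
  simp [expPS]

theorem fac_step (m : ℕ) :
    algebraMap ℚ A (1 / (Nat.factorial (m+1) : ℚ)) * ((m : A) + 1)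
      = algebraMap ℚ A (1 / (Nat.factorial m : ℚ)) := by
  have : ((m : A) + 1) = algebraMap ℚ A ((m : ℚ) + 1) := by push_cast; simp
  rw [this, ← map_mul]
  congr 1
  rw [Nat.factorial_succ]
  have h1 : ((Nat.factorial m : ℚ)) ≠ 0 := Nat.cast_ne_zero.mpr (Nat.factorial_ne_zero _)
  have h2 : ((m:ℚ) + 1) ≠ 0 := by positivity
  push_cast
  field_simp

theorem derivative_expPS (h : PowerSeries A) (hh : PowerSeries.constantCoeff (R := A) h = 0) :
    (PowerSeries.derivative A) (expPS A h)
      = (PowerSeries.derivative A) h * expPS A h := by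
  apply PowerSeries.ext
  intro n
  rw [PowerSeries.coeff_derivative]
  have lhs_eq : PowerSeries.coeff (R := A) (n+1) (expPS A h) * ((n:A)+1)
      = ∑ m ∈ Finset.range (n+1), algebraMap ℚ A (1 / (Nat.factorial m : ℚ)) *
          PowerSeries.coeff (R := A) n (h ^ m * (PowerSeries.derivative A) h) := by
    simp only [expPS, PowerSeries.coeff_mk]
    rw [Finset.sum_mul, Finset.sum_range_succ']
    have c0 : algebraMap ℚ A (1 / (Nat.factorial 0 : ℚ)) *
        PowerSeries.coeff (R := A) (n+1) (h ^ 0) * ((n:A)+1) = 0 := by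
      simp [PowerSeries.coeff_one]
    rw [c0, add_zero]
    refine Finset.sum_congr rfl fun m _ => ?_
    have hD : PowerSeries.coeff (R := A) (n+1) (h ^ (m+1)) * ((n:A)+1)
        = PowerSeries.coeff (R := A) n ((PowerSeries.derivative A) (h ^ (m+1))) :=
      (PowerSeries.coeff_derivative _ n).symm
    have hpow : (PowerSeries.derivative A) (h ^ (m+1))
        = (m+1) • (h ^ m * (PowerSeries.derivative A) h) := by
      rw [Derivation.leibniz_pow]
      simp [smul_eq_mul]
    rw [mul_assoc, hD, hpow, map_nsmul, nsmul_eq_mul, ← mul_assoc]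
    rw [show ((m+1 : ℕ) : A) = ((m : A) + 1) by push_cast; ring]
    rw [mul_comm (algebraMap ℚ A _) ((m:A)+1), mul_comm ((m:A)+1) _, fac_step]
  rw [lhs_eq, PowerSeries.coeff_mul]
  simp only [expPS, PowerSeries.coeff_mk]
  rw [show (∑ p ∈ Finset.HasAntidiagonal.antidiagonal n, PowerSeries.coeff (R := A) p.1 ((PowerSeries.derivative A) h) *
        ∑ m ∈ Finset.range (p.2 + 1), algebraMap ℚ A (1 / (Nat.factorial m : ℚ)) *
          PowerSeries.coeff (R := A) p.2 (h ^ m))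
      = ∑ p ∈ Finset.HasAntidiagonal.antidiagonal n, ∑ m ∈ Finset.range (n + 1),
          PowerSeries.coeff (R := A) p.1 ((PowerSeries.derivative A) h) *
            (algebraMap ℚ A (1 / (Nat.factorial m : ℚ)) * PowerSeries.coeff (R := A) p.2 (h ^ m))
      from Finset.sum_congr rfl fun p hp => by
        rw [Finset.mul_sum]
        refine Finset.sum_subset (Finset.range_subset_range.mpr
          (Nat.succ_le_succ (Finset.HasAntidiagonal.antidiagonal.snd_le hp))) fun m _ hm => ?_
        rw [coeff_pow_zero_of_lt hh (Nat.lt_of_succ_le (Nat.le_of_not_lt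
          (fun hc => hm (Finset.mem_range.mpr hc))))]
        simp]
  rw [Finset.sum_comm]
  refine Finset.sum_congr rfl fun m _ => ?_
  rw [mul_comm (h ^ m), PowerSeries.coeff_mul, Finset.mul_sum]
  refine Finset.sum_congr rfl fun p _ => ?_
  ring

end ExpPS

section Final
variable {A : Type*} [CommRing A] [Algebra ℚ A]

theorem ode_unique (q F G : PowerSeries A)
    (hF : (PowerSeries.derivative A) F = q * F) (hG : (PowerSeries.derivative A) G = q * G)
    (h0 : PowerSeries.coeff (R := A) 0 F = PowerSeries.coeff (R := A) 0 G) : F = G := by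
  apply PowerSeries.ext
  intro n
  induction n using Nat.strong_induction_on with
  | _ n ih =>
    match n with
    | 0 => exact h0
    | Nat.succ m =>
      have key : ∀ x : A, x * ((m:A)+1) * algebraMap ℚ A (1/((m:ℚ)+1)) = x := by
        intro x
        have h1 : ((m:A)+1) = algebraMap ℚ A ((m:ℚ)+1) := by push_cast; simp
        have h2 : ((m:ℚ)+1) ≠ 0 := by positivity
        rw [mul_assoc, h1, ← map_mul, mul_one_div, div_self h2]
        simp
      have hc : PowerSeries.coeff (R := A) m ((PowerSeries.derivative A) F)
          = PowerSeries.coeff (R := A) m ((PowerSeries.derivative A) G) := by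
        rw [hF, hG, PowerSeries.coeff_mul, PowerSeries.coeff_mul]
        refine Finset.sum_congr rfl fun p hp => ?_
        rw [ih p.2 (lt_of_le_of_lt (Finset.HasAntidiagonal.antidiagonal.snd_le hp) (Nat.lt_succ_self m))]
      rw [PowerSeries.coeff_derivative, PowerSeries.coeff_derivative] at hc
      have := congrArg (fun x : A => x * algebraMap ℚ A (1/((m:ℚ)+1))) hc
      rwa [key, key] at this

theorem trace_theta_q {d : ℕ} (R : Matrix (Fin d) (Fin d) A) :
    Matrix.trace (theta R (bernoulliPowerSeries ℚ - 1 + PowerSeries.C (R := ℚ) (1/2) * PowerSeries.X))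
      = PowerSeries.X * (PowerSeries.derivative A) (traceWheelSeries R) := by
  rw [trace_theta]
  apply PowerSeries.ext
  intro n
  rw [PowerSeries.coeff_mk]
  have hq : ∀ k : ℕ, PowerSeries.coeff (R := ℚ) k
      (bernoulliPowerSeries ℚ - 1 + PowerSeries.C (R := ℚ) (1/2) * PowerSeries.X)
      = bernoulli k / (Nat.factorial k : ℚ) - (if k = 0 then 1 else 0)
        + (if k = 1 then (1/2 : ℚ) else 0) := by
    intro k
    rw [map_add, map_sub, bernoulliPowerSeries, PowerSeries.coeff_mk,
      PowerSeries.coeff_one, PowerSeries.coeff_C_mul, PowerSeries.coeff_X]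
    simp [Algebra.algebraMap_self, mul_ite]
  cases n with
  | zero =>
    rw [hq 0]
    simp [bernoulli_zero, PowerSeries.coeff_zero_eq_constantCoeff]
  | succ m =>
    rw [PowerSeries.coeff_succ_X_mul, PowerSeries.coeff_derivative, hq (m+1)]
    simp only [Nat.succ_ne_zero, if_false, sub_zero, traceWheelSeries, PowerSeries.coeff_mk]
    rcases Nat.even_or_odd (m+1) with he | ho
    · have hm1 : m + 1 ≠ 1 := by
        rintro h
        rw [h] at he
        exact (Nat.not_even_one) he
      rw [if_pos (show Even (m+1) ∧ m+1 ≠ 0 from ⟨he, Nat.succ_ne_zero m⟩), if_neg hm1, add_zero]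
      have hcast : ((m:A)+1) = algebraMap ℚ A ((m:ℚ)+1) := by push_cast; simp
      have h1 : ((Nat.factorial (m+1) : ℚ)) ≠ 0 := Nat.cast_ne_zero.mpr (Nat.factorial_ne_zero _)
      have h2 : ((m:ℚ)+1) ≠ 0 := by positivity
      have hfac : bernoulli (m+1) / (((m+1 : ℕ):ℚ) * (Nat.factorial (m+1) : ℚ)) * ((m:ℚ)+1)
          = bernoulli (m+1) / (Nat.factorial (m+1) : ℚ) := by
        push_cast
        field_simp
      rw [mul_right_comm, hcast, ← map_mul, hfac]
    · have hodd : ¬ Even (m+1) := by simpa using ho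
      rw [if_neg (show ¬(Even (m+1) ∧ m+1 ≠ 0) from fun hc => hodd hc.1)]
      rcases eq_or_ne (m+1) 1 with h1 | h1
      · rw [h1]
        norm_num [bernoulli_one]
      · rw [if_neg h1, add_zero, bernoulli_eq_bernoulli'_of_ne_one h1,
          bernoulli'_eq_zero_of_odd ho (by omega)]
        simp

end Final

theorem det_sinhMatrix_eq_exp_traceWheelSeries
    (A : Type*) [CommRing A] [Algebra ℚ A] (d : ℕ) (hd : 1 ≤ d)
    (R : Matrix (Fin d) (Fin d) A) :
    Matrix.det (sinhMatrix R) = expPS A (traceWheelSeries R) := by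
  have hg0 : PowerSeries.constantCoeff (R := A) (traceWheelSeries R) = 0 := by
    rw [← PowerSeries.coeff_zero_eq_constantCoeff_apply]
    simp [traceWheelSeries]
  apply ode_unique ((PowerSeries.derivative A) (traceWheelSeries R))
  · have hXcancel : ∀ a b : PowerSeries A,
        PowerSeries.X * a = PowerSeries.X * b → a = b := by
      intro a b hab
      apply PowerSeries.ext
      intro n
      have := congrArg (PowerSeries.coeff (R := A) (n+1)) hab
      rwa [PowerSeries.coeff_succ_X_mul, PowerSeries.coeff_succ_X_mul] at this
    apply hXcancel
    rw [derivation_det (PowerSeries.derivative A)]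
    calc PowerSeries.X * Matrix.trace ((sinhMatrix R).adjugate *
            (sinhMatrix R).map ((PowerSeries.derivative A) ·))
        = Matrix.trace ((sinhMatrix R).adjugate *
            ((PowerSeries.X : PowerSeries A) •
              (sinhMatrix R).map ((PowerSeries.derivative A) ·))) := by
          rw [Matrix.mul_smul, Matrix.trace_smul, smul_eq_mul]
      _ = Matrix.trace ((theta R fS).adjugate *
            (theta R (bernoulliPowerSeries ℚ - 1 + PowerSeries.C (R := ℚ) (1/2) * PowerSeries.X) *
              theta R fS)) := by
          rw [sinhMatrix_eq_theta, X_smul_map_derivative, X_mul_derivative_fS, theta_mul]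
      _ = Matrix.trace
            (theta R (bernoulliPowerSeries ℚ - 1 + PowerSeries.C (R := ℚ) (1/2) * PowerSeries.X) *
              (theta R fS * (theta R fS).adjugate)) := by
          rw [Matrix.trace_mul_comm, Matrix.mul_assoc]
      _ = Matrix.trace
            (theta R (bernoulliPowerSeries ℚ - 1 + PowerSeries.C (R := ℚ) (1/2) * PowerSeries.X) *
              ((theta R fS).det • 1)) := by
          rw [Matrix.mul_adjugate]
      _ = (theta R fS).det *
            Matrix.trace (theta R (bernoulliPowerSeries ℚ - 1 + PowerSeries.C (R := ℚ) (1/2) *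
              PowerSeries.X)) := by
          rw [Matrix.mul_smul, mul_one, Matrix.trace_smul, smul_eq_mul]
      _ = PowerSeries.X *
            ((PowerSeries.derivative A) (traceWheelSeries R) * (sinhMatrix R).det) := by
          rw [trace_theta_q, ← sinhMatrix_eq_theta]
          ring
  · exact derivative_expPS _ hg0
  · rw [coeff_zero_expPS, PowerSeries.coeff_zero_eq_constantCoeff_apply, RingHom.map_det]
    have : (PowerSeries.constantCoeff (R := A)).mapMatrix (sinhMatrix R) = 1 := by
      ext i j
      rw [RingHom.mapMatrix_apply]
      simp only [Matrix.map_apply, sinhMatrix, Matrix.of_apply,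
        ← PowerSeries.coeff_zero_eq_constantCoeff_apply, PowerSeries.coeff_mk]
      norm_num
    rw [this, Matrix.det_one]
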